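/- A complex d×d matrix A satisfying Re⟨Aξ,ξ⟩ ≥ λ|ξ|² for some λ > 0 and all ξ ∈ ℂ^d has Δ_p(A) ≥ 0 for all p > 1 if and only if A has real entries. -/

import Mathlib

open scoped ComplexConjugate

noncomputable def Ip (p : ℝ) {d : ℕ} (ξ : EuclideanSpace ℂ (Fin d)) : EuclideanSpace ℂ (Fin d) :=
  WithLp.toLp 2 (fun i => ξ i + ((1 - 2 / p : ℝ) : ℂ) * conj (ξ i))

noncomputable def mulVecE {d : ℕ} (A : Matrix (Fin d) (Fin d) ℂ)
    (ξ : EuclideanSpace ℂ (Fin d)) : EuclideanSpace ℂ (Fin d) :=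
  WithLp.toLp 2 (fun i => ∑ j, A i j * ξ j)

noncomputable def Delta (p : ℝ) {d : ℕ} (A : Matrix (Fin d) (Fin d) ℂ) : ℝ :=
  sInf { r : ℝ | ∃ ξ : EuclideanSpace ℂ (Fin d), ‖ξ‖ = 1 ∧
    r = (@inner ℂ _ _ (mulVecE A ξ) (Ip p ξ)).re }

/-- real part pairing -/
noncomputable def Pq {d : ℕ} (A : Matrix (Fin d) (Fin d) ℂ) (ξ : EuclideanSpace ℂ (Fin d)) : ℝ :=
  ∑ i, (mulVecE A ξ i).re * (ξ i).re

/-- imaginary part pairing -/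
noncomputable def Qq {d : ℕ} (A : Matrix (Fin d) (Fin d) ℂ) (ξ : EuclideanSpace ℂ (Fin d)) : ℝ :=
  ∑ i, (mulVecE A ξ i).im * (ξ i).im

lemma inner_re {d : ℕ} (A : Matrix (Fin d) (Fin d) ℂ) (p : ℝ) (ξ : EuclideanSpace ℂ (Fin d)) :
    (@inner ℂ _ _ (mulVecE A ξ) (Ip p ξ)).re
      = (2 - 2/p) * Pq A ξ + (2/p) * Qq A ξ := by
  simp only [PiLp.inner_apply, RCLike.inner_apply, Ip, Pq, Qq, Complex.re_sum, PiLp.toLp_apply]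
  rw [Finset.mul_sum, Finset.mul_sum, ← Finset.sum_add_distrib]
  congr 1; ext i
  simp [Complex.mul_re, Complex.add_re, Complex.add_im, Complex.mul_im]
  ring

lemma real_P {d : ℕ} (A : Matrix (Fin d) (Fin d) ℂ) (himg : ∀ i j, (A i j).im = 0)
    (ξ : EuclideanSpace ℂ (Fin d)) :
    (@inner ℂ _ _ (mulVecE A (WithLp.toLp 2 (fun k => ((ξ k).re : ℂ)) : EuclideanSpace ℂ (Fin d)))
      (WithLp.toLp 2 (fun k => ((ξ k).re : ℂ)) : EuclideanSpace ℂ (Fin d))).re = Pq A ξ := by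
  unfold Pq mulVecE
  simp [PiLp.inner_apply, RCLike.inner_apply, Complex.re_sum, Complex.im_sum,
    Complex.mul_re, himg]
  exact Finset.sum_congr rfl fun _ _ => mul_comm _ _

lemma real_Q {d : ℕ} (A : Matrix (Fin d) (Fin d) ℂ) (himg : ∀ i j, (A i j).im = 0)
    (ξ : EuclideanSpace ℂ (Fin d)) :
    (@inner ℂ _ _ (mulVecE A (WithLp.toLp 2 (fun k => ((ξ k).im : ℂ)) : EuclideanSpace ℂ (Fin d)))
      (WithLp.toLp 2 (fun k => ((ξ k).im : ℂ)) : EuclideanSpace ℂ (Fin d))).re = Qq A ξ := by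
  unfold Qq mulVecE
  simp [PiLp.inner_apply, RCLike.inner_apply, Complex.re_sum, Complex.im_sum,
    Complex.mul_re, Complex.mul_im, himg]
  exact Finset.sum_congr rfl fun _ _ => mul_comm _ _

lemma entry_abs_le {d : ℕ} (ξ : EuclideanSpace ℂ (Fin d)) (hξ : ‖ξ‖ = 1) (k : Fin d) :
    ‖ξ k‖ ≤ 1 := by
  have h := EuclideanSpace.norm_eq ξ
  rw [hξ] at h
  have h1 : ∑ i, ‖ξ i‖ ^ 2 = 1 := by
    have := Real.sqrt_eq_one.mp h.symm
    exact this
  have h2 : ‖ξ k‖ ^ 2 ≤ 1 := by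
    rw [← h1]
    exact Finset.single_le_sum (f := fun i => ‖ξ i‖ ^ 2) (fun i _ => sq_nonneg _) (Finset.mem_univ k)
  have h3 : ‖ξ k‖ ≤ 1 := by nlinarith [norm_nonneg (ξ k)]
  simpa using h3

lemma Pq_abs_le {d : ℕ} (A : Matrix (Fin d) (Fin d) ℂ) (ξ : EuclideanSpace ℂ (Fin d))
    (hξ : ‖ξ‖ = 1) : |Pq A ξ| ≤ ∑ i, ∑ j, ‖A i j‖ := by
  unfold Pq
  refine le_trans (Finset.abs_sum_le_sum_abs _ _) (Finset.sum_le_sum fun i _ => ?_)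
  rw [abs_mul]
  have h1 : |(ξ i).re| ≤ 1 := le_trans (Complex.abs_re_le_norm _) (entry_abs_le ξ hξ i)
  have h2 : |(mulVecE A ξ i).re| ≤ ∑ j, ‖A i j‖ := by
    refine le_trans (Complex.abs_re_le_norm _) ?_
    unfold mulVecE
    simp only [PiLp.toLp_apply]
    refine le_trans (norm_sum_le _ _) (Finset.sum_le_sum fun j _ => ?_)
    rw [norm_mul]
    exact le_trans (mul_le_mul_of_nonneg_left (entry_abs_le ξ hξ j) (norm_nonneg _))
      (by rw [mul_one])
  calc |(mulVecE A ξ i).re| * |(ξ i).re| ≤ (∑ j, ‖A i j‖) * 1 :=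
        mul_le_mul h2 h1 (abs_nonneg _) (Finset.sum_nonneg fun j _ => norm_nonneg _)
    _ = ∑ j, ‖A i j‖ := mul_one _

lemma Qq_abs_le {d : ℕ} (A : Matrix (Fin d) (Fin d) ℂ) (ξ : EuclideanSpace ℂ (Fin d))
    (hξ : ‖ξ‖ = 1) : |Qq A ξ| ≤ ∑ i, ∑ j, ‖A i j‖ := by
  unfold Qq
  refine le_trans (Finset.abs_sum_le_sum_abs _ _) (Finset.sum_le_sum fun i _ => ?_)
  rw [abs_mul]
  have h1 : |(ξ i).im| ≤ 1 := le_trans (Complex.abs_im_le_norm _) (entry_abs_le ξ hξ i)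
  have h2 : |(mulVecE A ξ i).im| ≤ ∑ j, ‖A i j‖ := by
    refine le_trans (Complex.abs_im_le_norm _) ?_
    unfold mulVecE
    simp only [PiLp.toLp_apply]
    refine le_trans (norm_sum_le _ _) (Finset.sum_le_sum fun j _ => ?_)
    rw [norm_mul]
    exact le_trans (mul_le_mul_of_nonneg_left (entry_abs_le ξ hξ j) (norm_nonneg _))
      (by rw [mul_one])
  calc |(mulVecE A ξ i).im| * |(ξ i).im| ≤ (∑ j, ‖A i j‖) * 1 :=
        mul_le_mul h2 h1 (abs_nonneg _) (Finset.sum_nonneg fun j _ => norm_nonneg _)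
    _ = ∑ j, ‖A i j‖ := mul_one _

lemma Qq_smul {d : ℕ} (A : Matrix (Fin d) (Fin d) ℂ) (r : ℝ) (ξ : EuclideanSpace ℂ (Fin d)) :
    Qq A (r • ξ) = r ^ 2 * Qq A ξ := by
  unfold Qq mulVecE
  have key : ∀ i, (∑ j, A i j * ((r • ξ) j)) = (r : ℂ) * ∑ j, A i j * ξ j := by
    intro i
    rw [Finset.mul_sum]
    refine Finset.sum_congr rfl fun j _ => ?_
    have : (r • ξ) j = (r : ℂ) * ξ j := by
      simp [PiLp.smul_apply, Complex.real_smul]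
    rw [this]; ring
  rw [Finset.mul_sum]
  refine Finset.sum_congr rfl fun i _ => ?_
  simp only [PiLp.toLp_apply]
  rw [key i]
  have : (r • ξ) i = (r : ℂ) * ξ i := by simp [PiLp.smul_apply, Complex.real_smul]
  rw [this]
  simp [Complex.mul_im]
  ring

/-- an elliptic matrix has `Δ_p(A) ≥ 0` for all `p > 1` iff it is real. -/
theorem stmt4 {d : ℕ} (hd : 0 < d) (A : Matrix (Fin d) (Fin d) ℂ) (lam : ℝ) (hlam : 0 < lam)
    (hell : ∀ ξ : EuclideanSpace ℂ (Fin d),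
      lam * ‖ξ‖ ^ 2 ≤ (@inner ℂ _ _ (mulVecE A ξ) ξ).re) :
    (∀ p : ℝ, 1 < p → 0 ≤ Delta p A) ↔ ∀ i j, (A i j).im = 0 := by
  constructor
  · -- forward direction
    intro hΔ
    by_contra hc
    push_neg at hc
    obtain ⟨i₀, j₀, hne⟩ := hc
    set M : ℝ := ∑ i, ∑ j, ‖A i j‖ with hM
    -- step 1: on unit vectors, all the pairings are nonneg combinations
    have step1 : ∀ p : ℝ, 1 < p → ∀ ξ : EuclideanSpace ℂ (Fin d), ‖ξ‖ = 1 →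
        0 ≤ (2 - 2/p) * Pq A ξ + (2/p) * Qq A ξ := by
      intro p hp ξ hξ
      have hp0 : 0 < p := lt_trans one_pos hp
      have hc1 : 0 ≤ 2 - 2/p := by
        have : 2/p ≤ 2 := by rw [div_le_iff₀ hp0]; nlinarith
        linarith
      have hc2 : 0 < 2/p := by positivity
      have hbdd : BddBelow { r : ℝ | ∃ η : EuclideanSpace ℂ (Fin d), ‖η‖ = 1 ∧
          r = (@inner ℂ _ _ (mulVecE A η) (Ip p η)).re } := by
        refine ⟨-(2*M) - 2*M, ?_⟩
        rintro r ⟨η, hη, rfl⟩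
        rw [inner_re]
        have hP := Pq_abs_le A η hη
        have hQ := Qq_abs_le A η hη
        have hc1' : 2 - 2/p ≤ 2 := by linarith [hc2.le]
        have hc2' : 2/p ≤ 2 := by linarith
        have h1 : -(2*M) ≤ (2 - 2/p) * Pq A η := by nlinarith [abs_nonneg (Pq A η), neg_abs_le (Pq A η), le_abs_self (Pq A η)]
        have h2 : -(2*M) ≤ (2/p) * Qq A η := by nlinarith [abs_nonneg (Qq A η), neg_abs_le (Qq A η), le_abs_self (Qq A η)]
        linarith
      have hmem : (@inner ℂ _ _ (mulVecE A ξ) (Ip p ξ)).re ∈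
          { r : ℝ | ∃ η : EuclideanSpace ℂ (Fin d), ‖η‖ = 1 ∧
            r = (@inner ℂ _ _ (mulVecE A η) (Ip p η)).re } := ⟨ξ, hξ, rfl⟩
      have := le_trans (hΔ p hp) (csInf_le hbdd hmem)
      rwa [inner_re] at this
    -- step 2: Qq ≥ 0 on unit vectors
    have step2 : ∀ ξ : EuclideanSpace ℂ (Fin d), ‖ξ‖ = 1 → 0 ≤ Qq A ξ := by
      intro ξ hξ
      by_contra hQ
      push_neg at hQ
      set P := Pq A ξ
      set Q := Qq A ξ
      set δ : ℝ := min 1 (-Q / (|P| + |Q| + 1)) with hδdef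
      have habs : 0 < |P| + |Q| + 1 := by positivity
      have hδ0 : 0 < δ := lt_min one_pos (div_pos (by linarith) habs)
      have hδ1 : δ ≤ 1 := min_le_left _ _
      have hδ2 : δ * (|P| + |Q| + 1) ≤ -Q := by
        have := min_le_right 1 (-Q / (|P| + |Q| + 1))
        calc δ * (|P| + |Q| + 1) ≤ (-Q / (|P| + |Q| + 1)) * (|P| + |Q| + 1) :=
              mul_le_mul_of_nonneg_right this habs.le
          _ = -Q := by field_simp
      set p : ℝ := 2 / (2 - δ) with hpdef
      have h2δ : 0 < 2 - δ := by linarith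
      have hp1 : 1 < p := by
        rw [hpdef, lt_div_iff₀ h2δ]; linarith
      have h2p : 2/p = 2 - δ := by
        rw [hpdef]; field_simp
      have := step1 p hp1 ξ hξ
      rw [h2p] at this
      have hcontra : (2 - (2 - δ)) * P + (2 - δ) * Q < 0 := by
        have hPle : P ≤ |P| := le_abs_self P
        have hQle : |Q| = -Q := abs_of_neg hQ
        nlinarith
      linarith
    -- step 3: Qq ≥ 0 everywhere
    have step3 : ∀ ξ : EuclideanSpace ℂ (Fin d), ξ ≠ 0 → 0 ≤ Qq A ξ := by
      intro ξ hξ0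
      have hn : 0 < ‖ξ‖ := norm_pos_iff.mpr hξ0
      have hunit : ‖(‖ξ‖⁻¹ : ℝ) • ξ‖ = 1 := by
        rw [norm_smul, norm_inv, norm_norm, inv_mul_cancel₀ hn.ne']
      have h := step2 _ hunit
      rw [Qq_smul] at h
      have hr2 : 0 < (‖ξ‖⁻¹ : ℝ) ^ 2 := by positivity
      nlinarith
    -- step 4: explicit vector
    set t : ℝ := -(1 + |(A i₀ i₀).re|) / (A i₀ j₀).im with htdef
    set ξ₀ : EuclideanSpace ℂ (Fin d) :=
      WithLp.toLp 2 (fun k => ((if k = j₀ then t else 0 : ℝ) : ℂ)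
        + ((if k = i₀ then 1 else 0 : ℝ) : ℂ) * Complex.I) with hξ₀def
    have hξ₀im : ∀ k, (ξ₀ k).im = if k = i₀ then 1 else 0 := by
      intro k
      simp [hξ₀def]
    have hξ₀re : ∀ k, (ξ₀ k).re = if k = j₀ then t else 0 := by
      intro k
      simp [hξ₀def]
    have hξ₀ne : ξ₀ ≠ 0 := by
      intro h
      have : (ξ₀ i₀).im = 0 := by rw [h]; simp
      rw [hξ₀im i₀] at this
      simp at this
    have hQval : Qq A ξ₀ = (A i₀ i₀).re + (A i₀ j₀).im * t := by
      unfold Qq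
      calc ∑ i, (mulVecE A ξ₀ i).im * (ξ₀ i).im
          = ∑ i, (if i = i₀ then (mulVecE A ξ₀ i).im else 0) := by
            refine Finset.sum_congr rfl fun i _ => ?_
            rw [hξ₀im i]; split <;> simp
        _ = (mulVecE A ξ₀ i₀).im := by
            rw [Finset.sum_ite_eq' Finset.univ i₀]; simp
        _ = ∑ j, (A i₀ j * ξ₀ j).im := by
            simp only [mulVecE, Complex.im_sum]
        _ = ∑ j, ((A i₀ j).re * (if j = i₀ then 1 else 0)
              + (A i₀ j).im * (if j = j₀ then t else 0)) := by
            refine Finset.sum_congr rfl fun j _ => ?_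
            rw [Complex.mul_im, hξ₀im j, hξ₀re j]
        _ = (A i₀ i₀).re + (A i₀ j₀).im * t := by
            rw [Finset.sum_add_distrib]
            congr 1
            · simp [mul_ite, mul_one, mul_zero, Finset.sum_ite_eq']
            · simp [mul_ite, mul_zero, Finset.sum_ite_eq']
    have htval : (A i₀ j₀).im * t = -(1 + |(A i₀ i₀).re|) := by
      rw [htdef]; field_simp
    have := step3 ξ₀ hξ₀ne
    rw [hQval, htval] at this
    have habs := le_abs_self (A i₀ i₀).re
    linarith
  · -- backward direction
    intro himg p hp
    have hp0 : 0 < p := lt_trans one_pos hp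
    apply Real.sInf_nonneg
    rintro r ⟨ξ, hξ, rfl⟩
    rw [inner_re]
    have hP : 0 ≤ Pq A ξ := by
      refine le_trans ?_ ((real_P A himg ξ) ▸ hell _)
      positivity
    have hQ : 0 ≤ Qq A ξ := by
      refine le_trans ?_ ((real_Q A himg ξ) ▸ hell _)
      positivity
    have hc1 : 0 ≤ 2 - 2/p := by
      have : 2/p ≤ 2 := by rw [div_le_iff₀ hp0]; nlinarith
      linarith
    have hc2 : 0 ≤ 2/p := by positivity
    exact add_nonneg (mul_nonneg hc1 hP) (mul_nonneg hc2 hQ)
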